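/- If x and y are positive real numbers with x ≠ y and x^y = y^x, then there exists a real t ≠ 1, t > 0, such that x = t^(1/(t-1)) and y = t^(t/(t-1)). -/

import Mathlib

theorem stmt_1 (x y : ℝ) (hx : 0 < x) (hy : 0 < y) (hxy : x ≠ y)
    (h : x ^ y = y ^ x) :
    ∃ t : ℝ, 0 < t ∧ t ≠ 1 ∧ x = t ^ (1 / (t - 1)) ∧ y = t ^ (t / (t - 1)) := by
  set t : ℝ := y / x with htdef
  have ht : 0 < t := div_pos hy hx
  have ht1 : t ≠ 1 := by
    intro h1
    exact hxy (by rw [htdef, div_eq_one_iff_eq (ne_of_gt hx)] at h1; linarith)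
  have hts : t - 1 ≠ 0 := sub_ne_zero.mpr ht1
  have hyx : y = t * x := by rw [htdef, div_mul_cancel₀ y (ne_of_gt hx)]
  have hlog : y * Real.log x = x * Real.log y := by
    have := congrArg Real.log h
    rwa [Real.log_rpow hx, Real.log_rpow hy] at this
  have hlogy : Real.log y = Real.log t + Real.log x := by
    rw [hyx, Real.log_mul (ne_of_gt ht) (ne_of_gt hx)]
  have hkey : (t - 1) * Real.log x = Real.log t := by
    rw [hyx, Real.log_mul (ne_of_gt ht) (ne_of_gt hx)] at hlog
    have hx' : x ≠ 0 := ne_of_gt hx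
    nlinarith [hlog, sq_nonneg x, mul_pos hx hx]
  have hlx : Real.log x = Real.log t * (1 / (t - 1)) := by
    field_simp
    linarith [hkey]
  refine ⟨t, ht, ht1, ?_, ?_⟩
  · rw [Real.rpow_def_of_pos ht, ← hlx, Real.exp_log hx]
  · rw [Real.rpow_def_of_pos ht, ← Real.exp_log hy, hlogy, hlx]
    congr 1
    field_simp
    ring
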